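/- If p is an odd prime with Legendre symbol (5/p) = -1, then p divides F_{p+1}, i.e., the rank of apparition z(p) divides p + 1. -/
import Mathlib

open Polynomial

/-- Rank of apparition: least `k ≥ 1` with `p ∣ fib k`. -/
noncomputable def fibRank (p : ℕ) : ℕ := sInf {k | 0 < k ∧ p ∣ Nat.fib k}

/-- Pisano period: least `k ≥ 1` with `fib (n + k) ≡ fib n [MOD q]` for all `n`. -/
noncomputable def pisano (q : ℕ) : ℕ :=
  sInf {k | 0 < k ∧ ∀ n, Nat.fib (n + k) ≡ Nat.fib n [MOD q]}

theorem fib_aux (R : Type*) [CommRing R] (s : R) (hs : s ^ 2 = 5) (n : ℕ) :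
    (2 : R) ^ n * (Nat.fib n : R) * s = (1 + s) ^ n - (1 - s) ^ n := by
  induction n using Nat.strong_induction_on with
  | _ n ih =>
    match n with
    | 0 => simp
    | 1 => simp; ring
    | (m + 2) =>
      have h1 := ih m (by omega)
      have h2 := ih (m + 1) (by omega)
      rw [Nat.fib_add_two]
      push_cast
      have e1 : (1 + s) ^ (m + 2) = (1 + s) ^ m * (2 * (1 + s) + 4) := by
        have : (1 + s) ^ 2 = 2 * (1 + s) + 4 := by
          have : (1 + s) ^ 2 = 1 + 2 * s + s ^ 2 := by ring
          rw [this, hs]; ring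
        rw [pow_add, this]
      have e2 : (1 - s) ^ (m + 2) = (1 - s) ^ m * (2 * (1 - s) + 4) := by
        have : (1 - s) ^ 2 = 2 * (1 - s) + 4 := by
          have : (1 - s) ^ 2 = 1 - 2 * s + s ^ 2 := by ring
          rw [this, hs]; ring
        rw [pow_add, this]
      rw [e1, e2]
      linear_combination (4:R) * h1 + 2 * h2

theorem fibRank_dvd_add_one_of_legendre_neg (p : ℕ) [Fact p.Prime] (hodd : Odd p)
    (h : legendreSym p 5 = -1) : p ∣ Nat.fib (p + 1) ∧ fibRank p ∣ p + 1 := by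
  have hp : p.Prime := Fact.out
  have h5 : (5 : ZMod p) ≠ 0 := by
    intro h0
    have h0' : legendreSym p 5 = 0 := (legendreSym.eq_zero_iff p 5).mpr (by exact_mod_cast h0)
    rw [h] at h0'
    exact absurd h0' (by norm_num)
  have h2 : (2 : ZMod p) ≠ 0 := by
    intro h0
    have hd : p ∣ 2 := (ZMod.natCast_eq_zero_iff 2 p).mp (by exact_mod_cast h0)
    have := (Nat.prime_dvd_prime_iff_eq hp Nat.prime_two).mp hd
    rw [this] at hodd
    exact (Nat.not_odd_iff_even.mpr (by norm_num)) hodd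
  -- Euler criterion
  have heuler : (5 : ZMod p) ^ (p / 2) = -1 := by
    have := legendreSym.eq_pow p 5
    rw [h] at this
    push_cast at this
    exact this.symm
  -- Build R = ZMod p adjoin sqrt 5
  set f : (ZMod p)[X] := X ^ 2 - C 5 with hf
  have hdeg : f.degree = 2 := by
    rw [hf]
    compute_degree!
  have hdegne : f.degree ≠ 0 := by rw [hdeg]; norm_num
  let R := AdjoinRoot f
  have hinj : Function.Injective (AdjoinRoot.of f) :=
    AdjoinRoot.of.injective_of_degree_ne_zero hdegne
  set s : R := AdjoinRoot.root f with hsdef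
  have hs : s ^ 2 = AdjoinRoot.of f 5 := by
    have := AdjoinRoot.eval₂_root f
    rw [hf] at this
    simp [eval₂_sub, eval₂_pow, eval₂_X, eval₂_C] at this
    rw [sub_eq_zero] at this
    exact this
  have hchar : CharP R p := charP_of_injective_ringHom hinj p
  have h5R : AdjoinRoot.of f 5 = (5 : R) := by push_cast [map_ofNat]; rfl
  have hs5 : s ^ 2 = (5 : R) := by rw [hs, h5R]
  -- s^p = -s
  have hpodd : p = 2 * (p / 2) + 1 := by
    rcases hodd with ⟨k, hk⟩; omega
  haveI := hchar
  have hsp : s ^ p = -s := by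
    have hstep : s ^ p = s ^ (2 * (p / 2) + 1) := by rw [← hpodd]
    rw [hstep, pow_add, pow_mul, hs5, pow_one]
    have : ((5 : R)) ^ (p / 2) = -1 := by
      have := congrArg (AdjoinRoot.of f) heuler
      rw [map_pow, map_neg, map_one, h5R] at this
      exact this
    rw [this]; ring
  -- Frobenius
  have hfrob1 : (1 + s) ^ p = 1 - s := by
    rw [add_pow_char, one_pow, hsp]; ring
  have hfrob2 : (1 - s) ^ p = 1 + s := by
    rw [sub_eq_add_neg, add_pow_char, one_pow, Odd.neg_pow hodd, hsp]; ring
  -- main identity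
  have key := fib_aux R s hs5 (p + 1)
  have hL : (1 + s) ^ (p + 1) = (1 - s) * (1 + s) := by rw [pow_succ, hfrob1]
  have hM : (1 - s) ^ (p + 1) = (1 + s) * (1 - s) := by rw [pow_succ, hfrob2]
  rw [hL, hM] at key
  have key2 : (2 : R) ^ (p + 1) * (Nat.fib (p + 1) : R) * s = 0 := by rw [key]; ring
  -- deduce fib (p+1) = 0 in ZMod p
  have hsne : IsUnit s := by
    have : IsUnit (s ^ 2) := by
      rw [hs]
      exact (IsUnit.map (AdjoinRoot.of f) (isUnit_iff_ne_zero.mpr h5))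
    exact isUnit_of_mul_isUnit_left (by rwa [← sq])
  have h2R : IsUnit ((2 : R) ^ (p+1)) := by
    apply IsUnit.pow
    have : (2 : R) = AdjoinRoot.of f 2 := by push_cast [map_ofNat]; rfl
    rw [this]
    exact IsUnit.map _ (isUnit_iff_ne_zero.mpr h2)
  have hfib0 : ((Nat.fib (p + 1) : R)) = 0 := by
    have u := h2R.mul hsne
    have e : (2 : R) ^ (p + 1) * s * (Nat.fib (p + 1) : R) = 0 := by
      rw [← key2]; ring
    exact (u.mul_right_eq_zero).mp e
  have hdvd : p ∣ Nat.fib (p + 1) := by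
    have : ((Nat.fib (p+1) : ZMod p)) = 0 := by
      apply hinj
      rw [map_natCast, map_zero, hfib0]
    exact (ZMod.natCast_eq_zero_iff _ p).mp this
  refine ⟨hdvd, ?_⟩
  -- fibRank divides
  have hmem : (p + 1) ∈ {k | 0 < k ∧ p ∣ Nat.fib k} := ⟨Nat.succ_pos p, hdvd⟩
  have hne : {k | 0 < k ∧ p ∣ Nat.fib k}.Nonempty := ⟨p + 1, hmem⟩
  have hm := Nat.sInf_mem hne
  set m := fibRank p with hmdef
  obtain ⟨hmpos, hmdvd⟩ := hm
  have hg : p ∣ Nat.fib (Nat.gcd m (p + 1)) := by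
    rw [Nat.fib_gcd]
    exact Nat.dvd_gcd hmdvd hdvd
  have hgpos : 0 < Nat.gcd m (p + 1) := Nat.gcd_pos_of_pos_right _ (Nat.succ_pos p)
  have hle : m ≤ Nat.gcd m (p + 1) := Nat.sInf_le ⟨hgpos, hg⟩
  have hge : Nat.gcd m (p + 1) ≤ m := Nat.le_of_dvd hmpos (Nat.gcd_dvd_left _ _)
  have : Nat.gcd m (p + 1) = m := le_antisymm hge hle
  rw [← this]
  exact Nat.gcd_dvd_right _ _
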